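/- Define Half-delete Nim positions with n = 2m ≥ 2 heaps as sorted vectors z₁ ≤ z₂ ≤ ⋯ ≤ z_{2m} of positive integers; a move deletes m heaps and splits each of the remaining m heaps into two positive parts. Let 2^s be the smallest power of 2 strictly greater than z_{m+1}. With P-positions defined inductively, the position is a P-position if and only if (a) z₁,…,z_{m+1} are all odd, and (b) for every l, if z_l is even then z_l ≥ 2^s. -/

import Mathlib

/-- The `k`-th smallest element (0-indexed) of a multiset of naturals. -/
def nthVal (p : Multiset ℕ) (k : ℕ) : ℕ := (p.sort (· ≤ ·)).getD k 0

lemma sorted_getElem_le {l : List ℕ} (hs : l.Pairwise (· ≤ ·)) {i j : ℕ} (hij : i ≤ j)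
    (hj : j < l.length) : l[i]'(lt_of_le_of_lt hij hj) ≤ l[j] := by
  have := hs.rel_get_of_le (a := ⟨i, lt_of_le_of_lt hij hj⟩) (b := ⟨j, hj⟩)
    (by simpa using hij)
  simpa using this

lemma nthVal_mem {p : Multiset ℕ} {k : ℕ} (h : k < Multiset.card p) : nthVal p k ∈ p := by
  have hl : k < (p.sort (· ≤ ·)).length := by rwa [Multiset.length_sort]
  have : nthVal p k ∈ p.sort (· ≤ ·) := by
    rw [nthVal, List.getD_eq_getElem _ _ hl]
    exact List.getElem_mem _
  rwa [Multiset.mem_sort] at this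

lemma countP_nthVal_le {p : Multiset ℕ} {k : ℕ} (h : k < Multiset.card p) :
    k + 1 ≤ Multiset.countP (· ≤ nthVal p k) p := by
  classical
  set l := p.sort (· ≤ ·) with hldef
  have hlen : l.length = Multiset.card p := Multiset.length_sort _
  have hk : k < l.length := by omega
  have hs : l.Pairwise (· ≤ ·) := Multiset.pairwise_sort _ _
  have ht : nthVal p k = l[k] := List.getD_eq_getElem _ _ hk
  have hcoe : Multiset.countP (· ≤ nthVal p k) p
      = l.countP (fun b => decide (b ≤ nthVal p k)) := by
    have h0 := Multiset.coe_countP (fun b => b ≤ nthVal p k) (p.sort (· ≤ ·))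
    rw [Multiset.sort_eq] at h0
    rw [hldef]; exact h0
  rw [hcoe]
  have hall : ∀ a ∈ l.take (k+1), (fun b => decide (b ≤ nthVal p k)) a = true := by
    intro a ha
    obtain ⟨i, hi, rfl⟩ := List.mem_iff_getElem.1 ha
    rw [List.getElem_take]
    have hilen : i < (l.take (k+1)).length := hi
    have hik : i ≤ k := by
      have : (l.take (k+1)).length = min (k+1) l.length := List.length_take
      omega
    simp only [decide_eq_true_eq, ht]
    exact sorted_getElem_le hs hik hk
  calc k + 1 = (l.take (k+1)).length := by rw [List.length_take]; omega
    _ = (l.take (k+1)).countP _ := (List.countP_eq_length.2 hall).symm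
    _ ≤ l.countP _ := (List.take_sublist _ _).countP_le

lemma nthVal_le_of_countP {p : Multiset ℕ} {k c : ℕ} (h : k < Multiset.card p)
    (hc : k + 1 ≤ Multiset.countP (· ≤ c) p) : nthVal p k ≤ c := by
  classical
  by_contra hlt
  push_neg at hlt
  set l := p.sort (· ≤ ·) with hldef
  have hlen : l.length = Multiset.card p := Multiset.length_sort _
  have hk : k < l.length := by omega
  have hs : l.Pairwise (· ≤ ·) := Multiset.pairwise_sort _ _
  have ht : nthVal p k = l[k] := List.getD_eq_getElem _ _ hk
  have hcoe : Multiset.countP (· ≤ c) p = l.countP (fun b => decide (b ≤ c)) := by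
    have h0 := Multiset.coe_countP (fun b => b ≤ c) (p.sort (· ≤ ·))
    rw [Multiset.sort_eq] at h0
    rw [hldef]; exact h0
  rw [hcoe] at hc
  have hsplit : l.countP (fun b => decide (b ≤ c))
      = (l.take k).countP (fun b => decide (b ≤ c))
        + (l.drop k).countP (fun b => decide (b ≤ c)) := by
    conv_lhs => rw [← List.take_append_drop k l]
    exact List.countP_append
  have hdrop : (l.drop k).countP (fun b => decide (b ≤ c)) = 0 := by
    rw [List.countP_eq_zero]
    intro a ha
    obtain ⟨j, hj, rfl⟩ := List.mem_iff_getElem.1 ha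
    rw [List.getElem_drop]
    simp only [decide_eq_true_eq, not_le]
    have hjl : k + j < l.length := by
      have : (l.drop k).length = l.length - k := List.length_drop
      omega
    calc c < l[k] := by rw [← ht]; exact hlt
      _ ≤ l[k+j] := sorted_getElem_le hs (Nat.le_add_right k j) hjl
  have htake := List.countP_le_length (p := fun b => decide (b ≤ c)) (l := l.take k)
  rw [List.length_take] at htake
  omega

lemma countP_ge_nthVal {p : Multiset ℕ} {k : ℕ} (h : k < Multiset.card p) :
    Multiset.card p - k ≤ Multiset.countP (fun x => nthVal p k ≤ x) p := by
  classical
  set l := p.sort (· ≤ ·) with hldef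
  have hlen : l.length = Multiset.card p := Multiset.length_sort _
  have hk : k < l.length := by omega
  have hs : l.Pairwise (· ≤ ·) := Multiset.pairwise_sort _ _
  have ht : nthVal p k = l[k] := List.getD_eq_getElem _ _ hk
  have hcoe : Multiset.countP (fun x => nthVal p k ≤ x) p
      = l.countP (fun b => decide (nthVal p k ≤ b)) := by
    have h0 := Multiset.coe_countP (fun b => nthVal p k ≤ b) (p.sort (· ≤ ·))
    rw [Multiset.sort_eq] at h0
    rw [hldef]; exact h0
  rw [hcoe]
  have hall : ∀ a ∈ l.drop k, (fun b => decide (nthVal p k ≤ b)) a = true := by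
    intro a ha
    obtain ⟨j, hj, rfl⟩ := List.mem_iff_getElem.1 ha
    rw [List.getElem_drop]
    have hjl : k + j < l.length := by
      have : (l.drop k).length = l.length - k := List.length_drop
      omega
    simp only [decide_eq_true_eq, ht]
    exact sorted_getElem_le hs (Nat.le_add_right k j) hjl
  calc Multiset.card p - k = (l.drop k).length := by rw [List.length_drop]; omega
    _ = (l.drop k).countP _ := (List.countP_eq_length.2 hall).symm
    _ ≤ l.countP _ := (List.drop_sublist _ _).countP_le

lemma countP_pair {L : Multiset (ℕ × ℕ)} {P Q : ℕ × ℕ → Prop} [DecidablePred P] [DecidablePred Q]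
    (h : ∀ e ∈ L, ¬(P e ∧ Q e)) :
    Multiset.countP P L + Multiset.countP Q L ≤ Multiset.card L := by
  induction L using Multiset.induction_on with
  | empty => simp
  | cons a s ih =>
    have ha := h a (Multiset.mem_cons_self a s)
    have hs := ih (fun e he => h e (Multiset.mem_cons_of_mem he))
    rw [Multiset.countP_cons, Multiset.countP_cons, Multiset.card_cons]
    rcases not_and_or.1 ha with hna | hna
    · rw [if_neg hna]; split_ifs <;> omega
    · rw [if_neg hna]; split_ifs <;> omega
inductive NPos {α : Type*} (Move : α → α → Prop) : α → Prop
  | intro {p q : α} : Move p q → (∀ r, Move q r → NPos Move r) → NPos Move p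

def PPos {α : Type*} (Move : α → α → Prop) (p : α) : Prop :=
  ∀ q, Move p q → NPos Move q

/-- A move of Half-delete Nim with `2 * m` heaps: delete `m` heaps (`d`) and
split each of the remaining `m` heaps (recorded in `L` as pairs of positive
parts summing to the original heap) into two heaps. -/
def HalfMove (m : ℕ) (p q : Multiset ℕ) : Prop :=
  ∃ (d : Multiset ℕ) (L : Multiset (ℕ × ℕ)),
    Multiset.card d = m ∧ Multiset.card L = m ∧
    (∀ e ∈ L, 0 < e.1 ∧ 0 < e.2) ∧
    p = d + L.map (fun e => e.1 + e.2) ∧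
    q = L.map Prod.fst + L.map Prod.snd

lemma nPos_iff {α : Type*} {M : α → α → Prop} {p : α} :
    NPos M p ↔ ∃ q, M p q ∧ PPos M q := by
  constructor
  · intro h
    cases h with
    | intro mv h2 => exact ⟨_, mv, h2⟩
  · rintro ⟨q, mv, h⟩
    exact ⟨mv, h⟩

lemma not_nPos_pPos {α : Type*} {M : α → α → Prop} {p : α}
    (hn : NPos M p) (hp : PPos M p) : False := by
  induction hn with
  | @intro p q mv h2 ih =>
    obtain ⟨r, mv2, hr⟩ := nPos_iff.1 (hp q mv)
    exact ih r mv2 hr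

/-- The claimed characterization of P-positions. -/
def Sgood (m : ℕ) (p : Multiset ℕ) : Prop :=
  ∀ x ∈ p, Even x → 2 ^ Nat.size (nthVal p m) ≤ x

lemma move_props {m : ℕ} (hm : 1 ≤ m) {p q : Multiset ℕ} (hpos : ∀ x ∈ p, 0 < x)
    (hmv : HalfMove m p q) :
    Multiset.card q = 2 * m ∧ (∀ x ∈ q, 0 < x) ∧ q.sum < p.sum := by
  obtain ⟨d, L, hd, hL, hLpos, hpe, hqe⟩ := hmv
  have hcq : Multiset.card q = 2 * m := by
    rw [hqe, Multiset.card_add, Multiset.card_map, Multiset.card_map, hL]; omega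
  refine ⟨hcq, ?_, ?_⟩
  · intro x hx
    rw [hqe] at hx
    rcases Multiset.mem_add.1 hx with h | h <;>
      obtain ⟨e, he, rfl⟩ := Multiset.mem_map.1 h
    · exact (hLpos e he).1
    · exact (hLpos e he).2
  · have hqsum : q.sum = (L.map (fun e => e.1 + e.2)).sum := by
      rw [hqe, Multiset.sum_add, ← Multiset.sum_map_add]
    have hpsum : p.sum = d.sum + (L.map (fun e => e.1 + e.2)).sum := by
      rw [hpe, Multiset.sum_add]
    have hdpos : 0 < d.sum := by
      have hdne : d ≠ 0 := by
        intro h0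
        rw [h0] at hd
        simp at hd
        omega
      obtain ⟨a, ha⟩ := Multiset.exists_mem_of_ne_zero hdne
      have hap : a ∈ p := by rw [hpe]; exact Multiset.mem_add.2 (.inl ha)
      have h1 := Multiset.single_le_sum (fun y _ => Nat.zero_le y) a ha
      have h2 := hpos a hap
      omega
    omega

lemma notS_of_move {m : ℕ} (hm : 1 ≤ m) {p q : Multiset ℕ}
    (hcard : Multiset.card p = 2 * m) (hpos : ∀ x ∈ p, 0 < x)
    (hSp : Sgood m p) (hmv : HalfMove m p q) : ¬ Sgood m q := by
  intro hSq
  obtain ⟨hcq, hqpos, _⟩ := move_props hm hpos hmv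
  obtain ⟨d, L, hd, hL, hLpos, hpe, hqe⟩ := hmv
  set t := nthVal p m with htdef
  set s := Nat.size t with hsdef
  set t' := nthVal q m with ht'def
  set s' := Nat.size t' with hs'def
  -- Fact 1 : some kept heap is ≤ t
  have hA := countP_nthVal_le (p := p) (k := m) (by omega)
  rw [← htdef] at hA
  have hA' : m + 1 ≤ Multiset.countP (· ≤ t) d
      + Multiset.countP (· ≤ t) (L.map (fun e => e.1 + e.2)) := by
    rw [← Multiset.countP_add, ← hpe]; exact hA
  have hdle := Multiset.countP_le_card (· ≤ t) d
  have hpos1 : 0 < Multiset.countP (· ≤ t) (L.map (fun e => e.1 + e.2)) := by omega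
  obtain ⟨y, hy, hyt⟩ := Multiset.countP_pos.1 hpos1
  obtain ⟨e, heL, rfl⟩ := Multiset.mem_map.1 hy
  have hyp : e.1 + e.2 ∈ p := by
    rw [hpe]; exact Multiset.mem_add.2 (.inr (Multiset.mem_map_of_mem _ heL))
  have htlt : t < 2 ^ s := Nat.lt_size_self t
  have hyodd : ¬ Even (e.1 + e.2) := by
    intro hev
    have hx := hSp _ hyp hev
    rw [← htdef, ← hsdef] at hx
    omega
  obtain ⟨he1, he2⟩ := hLpos e heL
  -- the even part of this heap
  have hw : ∃ w, w ∈ q ∧ Even w ∧ w < 2 ^ s := by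
    have hq1 : e.1 ∈ q := by
      rw [hqe]; exact Multiset.mem_add.2 (.inl (Multiset.mem_map_of_mem _ heL))
    have hq2 : e.2 ∈ q := by
      rw [hqe]; exact Multiset.mem_add.2 (.inr (Multiset.mem_map_of_mem _ heL))
    rw [Nat.even_iff] at hyodd
    rcases Nat.even_or_odd e.1 with h1 | h1
    · exact ⟨e.1, hq1, h1, by omega⟩
    · rw [Nat.odd_iff] at h1
      have h2 : Even e.2 := Nat.even_iff.2 (by omega)
      exact ⟨e.2, hq2, h2, by omega⟩
  obtain ⟨w, hwq, hwe, hwlt⟩ := hw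
  have h2s'w : 2 ^ s' ≤ w := hSq w hwq hwe
  have hss : s' < s := by
    have := (Nat.pow_lt_pow_iff_right (a := 2) (by norm_num)).1 (by omega : 2 ^ s' < 2 ^ s)
    exact this
  -- Fact 2 : some pair has both parts ≤ t'
  have hA2 := countP_nthVal_le (p := q) (k := m) (by omega)
  rw [← ht'def] at hA2
  have hA2' : m + 1 ≤ Multiset.countP (fun e : ℕ × ℕ => e.1 ≤ t') L
      + Multiset.countP (fun e : ℕ × ℕ => e.2 ≤ t') L := by
    have h1 : Multiset.countP (· ≤ t') (L.map Prod.fst)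
        = Multiset.countP (fun e : ℕ × ℕ => e.1 ≤ t') L := by
      rw [Multiset.countP_map, Multiset.countP_eq_card_filter]
    have h2 : Multiset.countP (· ≤ t') (L.map Prod.snd)
        = Multiset.countP (fun e : ℕ × ℕ => e.2 ≤ t') L := by
      rw [Multiset.countP_map, Multiset.countP_eq_card_filter]
    rw [← h1, ← h2, ← Multiset.countP_add, ← hqe]
    exact hA2
  have hpair : ∃ e ∈ L, e.1 ≤ t' ∧ e.2 ≤ t' := by
    by_contra hno
    push_neg at hno
    have := countP_pair (L := L) (P := fun e => e.1 ≤ t') (Q := fun e => e.2 ≤ t')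
      (fun e he hand => absurd hand.2 (not_le.2 (hno e he hand.1)))
    omega
  obtain ⟨f, hfL, hf1, hf2⟩ := hpair
  have ht'lt : t' < 2 ^ s' := Nat.lt_size_self t'
  have hfq1 : f.1 ∈ q := by
    rw [hqe]; exact Multiset.mem_add.2 (.inl (Multiset.mem_map_of_mem _ hfL))
  have hfq2 : f.2 ∈ q := by
    rw [hqe]; exact Multiset.mem_add.2 (.inr (Multiset.mem_map_of_mem _ hfL))
  have ho1 : ¬ Even f.1 := by
    intro hev
    have hx := hSq _ hfq1 hev
    rw [← ht'def, ← hs'def] at hx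
    omega
  have ho2 : ¬ Even f.2 := by
    intro hev
    have hx := hSq _ hfq2 hev
    rw [← ht'def, ← hs'def] at hx
    omega
  have hsum_even : Even (f.1 + f.2) := by
    rw [Nat.even_iff] at ho1 ho2 ⊢
    omega
  have hsum_p : f.1 + f.2 ∈ p := by
    rw [hpe]; exact Multiset.mem_add.2 (.inr (Multiset.mem_map_of_mem _ hfL))
  have hbig := hSp _ hsum_p hsum_even
  rw [← htdef, ← hsdef] at hbig
  have hpow : 2 ^ (s' + 1) ≤ 2 ^ s := Nat.pow_le_pow_right (by norm_num) (by omega)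
  have hpow2 : 2 ^ (s' + 1) = 2 * 2 ^ s' := by rw [pow_succ]; ring
  omega

lemma moveToS {m : ℕ} (hm : 1 ≤ m) {p : Multiset ℕ}
    (hcard : Multiset.card p = 2 * m) (hpos : ∀ x ∈ p, 0 < x) (hS : ¬ Sgood m p) :
    ∃ q, HalfMove m p q ∧ Sgood m q := by
  classical
  rw [Sgood] at hS
  push_neg at hS
  obtain ⟨v, hvp, hveven, hvlt⟩ := hS
  set t := nthVal p m with htdef
  set s := Nat.size t with hsdef
  have hmlt : m < Multiset.card p := by omega
  have htmem : t ∈ p := nthVal_mem hmlt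
  have htpos : 0 < t := hpos t htmem
  have hv2 : 2 ≤ v := by
    have := hpos v hvp
    rw [Nat.even_iff] at hveven
    omega
  have ht2 : 2 ≤ t := by
    by_contra hle
    push_neg at hle
    have ht1 : t = 1 := by omega
    apply absurd hvlt
    push_neg
    have hone : s = 1 := by rw [hsdef, ht1]; exact Nat.size_one
    rw [hone, pow_one]
    rw [Nat.even_iff] at hveven
    omega
  have hs2 : 2 ≤ s := Nat.lt_size.2 ht2
  have hXt : 2 ^ (s - 1) ≤ t := Nat.lt_size.1 (by omega)
  have hX2 : 2 ≤ 2 ^ (s - 1) := by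
    calc (2:ℕ) = 2 ^ 1 := (pow_one 2).symm
    _ ≤ 2 ^ (s-1) := Nat.pow_le_pow_right (by norm_num) (by omega)
  have hXeven : 2 ^ (s - 1) % 2 = 0 :=
    Nat.even_iff.1 ((Nat.even_pow).2 ⟨even_two, by omega⟩)
  have h2s : 2 ^ (s - 1) * 2 = 2 ^ s := by
    rw [← pow_succ]
    congr 1
    omega
  have hvmod : v % 2 = 0 := Nat.even_iff.1 hveven
  set c := min (v - 1) (2 ^ (s - 1) - 1) with hcdef
  have hc1 : 1 ≤ c := by omega
  have hcv : c ≤ v - 1 := min_le_left _ _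
  have hcX : c ≤ 2 ^ (s - 1) - 1 := min_le_right _ _
  have hvc : v - c ≤ c := by omega
  have hcodd : c % 2 = 1 := by omega
  -- the m-1 other kept heaps
  have hAg := countP_ge_nthVal (p := p) (k := m) hmlt
  rw [← htdef] at hAg
  have herase : p = v ::ₘ p.erase v := (Multiset.cons_erase hvp).symm
  have hcount_erase : m - 1 ≤ Multiset.countP (fun x => t ≤ x) (p.erase v) := by
    have h0 : Multiset.countP (fun x => t ≤ x) p
        = Multiset.countP (fun x => t ≤ x) (p.erase v) + if t ≤ v then 1 else 0 := by
      conv_lhs => rw [herase]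
      exact Multiset.countP_cons _ _ _
    split_ifs at h0 <;> omega
  set F := (p.erase v).filter (fun x => t ≤ x) with hFdef
  have hFcard : m - 1 ≤ Multiset.card F := by
    rw [hFdef, ← Multiset.countP_eq_card_filter]
    exact hcount_erase
  set K : Multiset ℕ := ((F.toList.take (m - 1) : List ℕ) : Multiset ℕ) with hKdef
  have hKF : K ≤ F := by
    rw [hKdef]
    conv_rhs => rw [← F.coe_toList]
    exact Multiset.coe_le.2 (List.take_sublist _ _).subperm
  have hKcard : Multiset.card K = m - 1 := by
    rw [hKdef, Multiset.coe_card, List.length_take, Multiset.length_toList]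
    omega
  have hKmem : ∀ y ∈ K, t ≤ y ∧ y ∈ p.erase v := by
    intro y hy
    have := Multiset.mem_of_le hKF hy
    rw [hFdef, Multiset.mem_filter] at this
    exact ⟨this.2, this.1⟩
  set kept : Multiset ℕ := v ::ₘ K with hkeptdef
  have hkept : kept ≤ p := by
    rw [hkeptdef]
    have h1 : K ≤ p.erase v := hKF.trans (Multiset.filter_le _ _)
    calc v ::ₘ K ≤ v ::ₘ p.erase v := Multiset.cons_le_cons _ h1
    _ = p := Multiset.cons_erase hvp
  set d := p - kept with hddef
  have hpd : p = d + kept := (tsub_add_cancel_of_le hkept).symm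
  have hdcard : Multiset.card d = m := by
    rw [hddef, Multiset.card_sub hkept, hkeptdef, Multiset.card_cons, hKcard, hcard]
    omega
  set L : Multiset (ℕ × ℕ) := (v - c, c) ::ₘ K.map (fun y => (1, y - 1)) with hLdef
  have hLcard : Multiset.card L = m := by
    rw [hLdef, Multiset.card_cons, Multiset.card_map, hKcard]
    omega
  have hLpos : ∀ e ∈ L, 0 < e.1 ∧ 0 < e.2 := by
    intro e he
    rw [hLdef, Multiset.mem_cons] at he
    rcases he with rfl | he
    · constructor <;> simp <;> omega
    · obtain ⟨y, hy, rfl⟩ := Multiset.mem_map.1 he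
      have := (hKmem y hy).1
      constructor <;> simp <;> omega
  have hsumL : kept = L.map (fun e => e.1 + e.2) := by
    rw [hLdef, Multiset.map_cons, Multiset.map_map, hkeptdef]
    have h1 : v - c + c = v := by omega
    have h2 : Multiset.map ((fun e : ℕ × ℕ => e.1 + e.2) ∘ fun y => (1, y - 1)) K = K := by
      rw [Multiset.map_congr rfl
        (fun y hy => (by have := (hKmem y hy).1; simp; omega :
          ((fun e : ℕ × ℕ => e.1 + e.2) ∘ fun y => (1, y - 1)) y = id y))]
      exact Multiset.map_id K
    rw [h1, h2]
  refine ⟨L.map Prod.fst + L.map Prod.snd, ⟨d, L, hdcard, hLcard, hLpos, by rw [hpd, hsumL], rfl⟩, ?_⟩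
  set q := L.map Prod.fst + L.map Prod.snd with hqdef
  have hq1 : L.map Prod.fst = (v - c) ::ₘ K.map (fun _ => 1) := by
    rw [hLdef, Multiset.map_cons, Multiset.map_map]
    rfl
  have hq2 : L.map Prod.snd = c ::ₘ K.map (fun y => y - 1) := by
    rw [hLdef, Multiset.map_cons, Multiset.map_map]
    rfl
  have hcq : Multiset.card q = 2 * m := by
    rw [hqdef, Multiset.card_add, Multiset.card_map, Multiset.card_map, hLcard]
    omega
  -- bound the new pivot
  have ht' : nthVal q m ≤ c := by
    apply nthVal_le_of_countP (by omega)
    rw [hqdef, Multiset.countP_add, hq1, hq2, Multiset.countP_cons, Multiset.countP_cons]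
    have hone : Multiset.countP (· ≤ c) (K.map (fun _ => 1)) = Multiset.card K := by
      rw [Multiset.countP_map, Multiset.filter_eq_self.2 (fun a _ => hc1)]
    rw [hone, hKcard]
    rw [if_pos hvc, if_pos (le_refl c)]
    omega
  have hs' : Nat.size (nthVal q m) ≤ s - 1 := by
    calc Nat.size (nthVal q m) ≤ Nat.size (2 ^ (s - 1) - 1) :=
          Nat.size_le_size (by omega)
    _ ≤ s - 1 := Nat.size_le.2 (by omega)
  -- verify the S condition for q
  intro x hx hxe
  rw [hqdef, Multiset.mem_add, hq1, hq2] at hx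
  have hxmod : x % 2 = 0 := Nat.even_iff.1 hxe
  have hpowle : 2 ^ Nat.size (nthVal q m) ≤ 2 ^ (s - 1) :=
    Nat.pow_le_pow_right (by norm_num) hs'
  rcases hx with hx | hx
  · rw [Multiset.mem_cons] at hx
    rcases hx with rfl | hx
    · omega
    · obtain ⟨y, hy, rfl⟩ := Multiset.mem_map.1 hx
      omega
  · rw [Multiset.mem_cons] at hx
    rcases hx with rfl | hx
    · omega
    · obtain ⟨y, hy, rfl⟩ := Multiset.mem_map.1 hx
      have hty := (hKmem y hy).1
      -- y - 1 is even, y ≥ t ≥ 2^(s-1), 2^(s-1) even, so y ≥ 2^(s-1)+1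
      omega

lemma main_iff {m : ℕ} (hm : 1 ≤ m) :
    ∀ N (p : Multiset ℕ), p.sum ≤ N → Multiset.card p = 2 * m → (∀ x ∈ p, 0 < x) →
      (PPos (HalfMove m) p ↔ Sgood m p) := by
  intro N
  induction N with
  | zero =>
    intro p hsum hcard hpos
    exfalso
    have hne : p ≠ 0 := by
      intro h0
      rw [h0] at hcard
      simp at hcard
      omega
    obtain ⟨x, hx⟩ := Multiset.exists_mem_of_ne_zero hne
    have h1 := Multiset.single_le_sum (fun y _ => Nat.zero_le y) x hx
    have h2 := hpos x hx
    omega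
  | succ N ih =>
    intro p hsum hcard hpos
    constructor
    · intro hP
      by_contra hS
      obtain ⟨q, hmv, hSq⟩ := moveToS hm hcard hpos hS
      obtain ⟨hcq, hposq, hlt⟩ := move_props hm hpos hmv
      have hPq : PPos (HalfMove m) q := (ih q (by omega) hcq hposq).2 hSq
      exact not_nPos_pPos (hP q hmv) hPq
    · intro hS q hmv
      obtain ⟨hcq, hposq, hlt⟩ := move_props hm hpos hmv
      have hSq : ¬ Sgood m q := notS_of_move hm hcard hpos hS hmv
      obtain ⟨r, hmv2, hSr⟩ := moveToS hm hcq hposq hSq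
      obtain ⟨hcr, hposr, hlt2⟩ := move_props hm hposq hmv2
      have hPr : PPos (HalfMove m) r := (ih r (by omega) hcr hposr).2 hSr
      exact nPos_iff.2 ⟨r, hmv2, hPr⟩

/-- Half-delete Nim: the sorted position `z₁ ≤ … ≤ z_{2m}` (here `z : Fin (2*m) → ℕ`
monotone, zero-indexed so that `z_{m+1}` is `z ⟨m, _⟩`) is a `P`-position iff
(a) `z₁, …, z_{m+1}` are all odd, and (b) every even `z_l` satisfies `2^s ≤ z_l`,
where `2^s` is the smallest power of `2` strictly greater than `z_{m+1}`
(i.e. `s = Nat.size z_{m+1}`). -/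
theorem stmt15 (m : ℕ) (hm : 1 ≤ m) (z : Fin (2 * m) → ℕ)
    (hpos : ∀ i, 0 < z i) (hmono : Monotone z) :
    PPos (HalfMove m) (Finset.univ.val.map z) ↔
      ((∀ i : Fin (2 * m), (i : ℕ) ≤ m → Odd (z i)) ∧
       ∀ i : Fin (2 * m), Even (z i) →
         2 ^ Nat.size (z ⟨m, by omega⟩) ≤ z i) := by
  classical
  set p := Finset.univ.val.map z with hpdef
  have hpofn : p = (List.ofFn z : Multiset ℕ) := Fin.univ_val_map z
  have hcard : Multiset.card p = 2 * m := by
    rw [hpofn, Multiset.coe_card, List.length_ofFn]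
  have hpos' : ∀ x ∈ p, 0 < x := by
    intro x hx
    obtain ⟨i, _, rfl⟩ := Multiset.mem_map.1 hx
    exact hpos i
  have hsort : p.sort (· ≤ ·) = List.ofFn z := by
    apply List.Perm.eq_of_pairwise'
      (Multiset.pairwise_sort _ _) (hmono.sortedLE_ofFn.pairwise) (Multiset.coe_eq_coe.1 ?_)
    rw [Multiset.sort_eq, hpofn]
  have hmlt : m < (List.ofFn z).length := by rw [List.length_ofFn]; omega
  have hnth : nthVal p m = z ⟨m, by omega⟩ := by
    rw [nthVal, hsort, List.getD_eq_getElem _ _ hmlt, List.getElem_ofFn]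
  have hmem : ∀ i : Fin (2 * m), z i ∈ p := by
    intro i
    exact Multiset.mem_map.2 ⟨i, Finset.mem_univ i, rfl⟩
  rw [main_iff hm p.sum p le_rfl hcard hpos']
  constructor
  · intro h
    constructor
    · intro i him
      by_contra hodd
      rw [Nat.not_odd_iff_even] at hodd
      have hle : z i ≤ z ⟨m, by omega⟩ := hmono (by simpa [Fin.le_def] using him)
      have h1 := h (z i) (hmem i) hodd
      rw [hnth] at h1
      have h2 := Nat.lt_size_self (z ⟨m, by omega⟩)
      omega
    · intro i hev
      have h1 := h (z i) (hmem i) hev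
      rwa [hnth] at h1
  · rintro ⟨h1, h2⟩ x hx hev
    obtain ⟨i, _, rfl⟩ := Multiset.mem_map.1 hx
    rw [hnth]
    exact h2 i hev
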